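/- Let δ : I → ℝ³ be a unit-speed curve lying on the sphere of radius r centered at the origin, with Darboux frame (T_δ, N_δ, (1/r)δ). Then the normal surface M parametrized by X(u,z) = δ(u) + z·N_δ(u) has unit normal N(u,z) = (1/r)δ(u) wherever it is regular, and hence ⟨N(u,z), X(u,z)⟩ = r at every point; i.e., M is a concircular surface with axis the position vector field. -/
import Mathlib


open scoped InnerProductSpace

noncomputable section

/-- The normal surface `X(u,z) = δ(u) + z N_δ(u)` to a spherical curve δ on the
sphere of radius `r` centered at the origin has unit normal `(1/r) δ(u)`
(wherever it is regular), and `⟨N, X⟩ = r` everywhere: it is a concircular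
surface with axis the position vector field. -/
theorem normal_surface_of_spherical_curve_is_concircular
    (δ Tδ Nδ : ℝ → EuclideanSpace ℝ (Fin 3)) (r : ℝ) (hr : 0 < r)
    -- δ is a unit-speed curve on the sphere of radius r centered at the origin
    (hsph : ∀ u, ‖δ u‖ = r)
    (hδ' : ∀ u, deriv δ u = Tδ u)
    (hTunit : ∀ u, ‖Tδ u‖ = 1) (hNunit : ∀ u, ‖Nδ u‖ = 1)
    (hTN : ∀ u, ⟪Tδ u, Nδ u⟫_ℝ = 0)
    (hNδsph : ∀ u, ⟪Nδ u, δ u⟫_ℝ = 0)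
    (hδd : Differentiable ℝ δ) (hNd : Differentiable ℝ Nδ) :
    ∀ u z,
      ‖(1 / r) • δ u‖ = 1 ∧
      ⟪(1 / r) • δ u, deriv (fun u' => δ u' + z • Nδ u') u⟫_ℝ = 0 ∧
      ⟪(1 / r) • δ u, deriv (fun z' : ℝ => δ u + z' • Nδ u) z⟫_ℝ = 0 ∧
      ⟪(1 / r) • δ u, δ u + z • Nδ u⟫_ℝ = r := by
  intro u z
  have hrne : r ≠ 0 := ne_of_gt hr
  -- δ has derivative Tδ
  have hδT : ∀ u, HasDerivAt δ (Tδ u) u := fun u => (hδ' u) ▸ (hδd u).hasDerivAt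
  -- ⟪δ, Tδ⟫ = 0
  have hδTperp : ∀ u, ⟪δ u, Tδ u⟫_ℝ = 0 := by
    intro u
    have h1 : HasDerivAt (fun u => ⟪δ u, δ u⟫_ℝ) (⟪δ u, Tδ u⟫_ℝ + ⟪Tδ u, δ u⟫_ℝ) u :=
      (hδT u).inner ℝ (hδT u)
    have h2 : (fun u => ⟪δ u, δ u⟫_ℝ) = fun _ => r ^ 2 := by
      funext v
      rw [real_inner_self_eq_norm_sq, hsph v]
    rw [h2] at h1
    have h3 := (hasDerivAt_const u (r ^ 2)).unique h1
    rw [real_inner_comm (δ u)] at h3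
    linarith
  -- ⟪δ, deriv Nδ⟫ = 0
  have hNperp : ⟪δ u, deriv Nδ u⟫_ℝ = 0 := by
    have h1 : HasDerivAt (fun u => ⟪Nδ u, δ u⟫_ℝ)
        (⟪Nδ u, Tδ u⟫_ℝ + ⟪deriv Nδ u, δ u⟫_ℝ) u :=
      (hNd u).hasDerivAt.inner ℝ (hδT u)
    have h2 : (fun u => ⟪Nδ u, δ u⟫_ℝ) = fun _ => (0 : ℝ) := funext hNδsph
    rw [h2] at h1
    have h3 := (hasDerivAt_const u (0 : ℝ)).unique h1
    have h4 : ⟪Nδ u, Tδ u⟫_ℝ = 0 := by rw [real_inner_comm]; exact hTN u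
    rw [real_inner_comm]
    linarith [h3, h4]
  have hderiv_u : deriv (fun u' => δ u' + z • Nδ u') u = Tδ u + z • deriv Nδ u := by
    have : HasDerivAt (fun u' => δ u' + z • Nδ u') (Tδ u + z • deriv Nδ u) u :=
      (hδT u).add ((hNd u).hasDerivAt.const_smul z)
    exact this.deriv
  have hderiv_z : deriv (fun z' : ℝ => δ u + z' • Nδ u) z = Nδ u := by
    have h : HasDerivAt (fun z' : ℝ => δ u + z' • Nδ u) (0 + (1 : ℝ) • Nδ u) z :=
      (hasDerivAt_const z (δ u)).add ((hasDerivAt_id z).smul_const (Nδ u))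
    simpa using h.deriv
  refine ⟨?_, ?_, ?_, ?_⟩
  · rw [norm_smul]
    simp [hsph u, abs_of_pos hr, hrne]
  · rw [hderiv_u, real_inner_smul_left, inner_add_right, real_inner_smul_right,
      hδTperp u, hNperp]
    ring
  · rw [hderiv_z, real_inner_smul_left, real_inner_comm, hNδsph u]
    ring
  · rw [real_inner_smul_left, inner_add_right, real_inner_smul_right,
      real_inner_self_eq_norm_sq, hsph u, real_inner_comm, hNδsph u]
    field_simp
    ring
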